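/- Let X and Y be real Hilbert spaces, A, V : X → Y bounded linear operators, γ_G > 0, and G : X → ℝ a γ_G-strongly convex function. Suppose x*, x̂ ∈ X and y*, ŷ ∈ Y are such that: some subgradient g* of G at x* satisfies g* + A*(y*) = 0; some subgradient f* of F* at y* satisfies f* = A(x*); some subgradient ĝ of G at x̂ satisfies ĝ + V*(ŷ) = 0; and some subgradient f̂ of F* at ŷ satisfies f̂ = A(x̂), where F* : Y → ℝ is any function. Then ‖x* − x̂‖ ≤ (1/γ_G)·‖V*(ŷ) − A*(ŷ)‖. -/

import Mathlib

open scoped RealInnerProductSpace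

/-- `g` is a subgradient of `f` at `x`. -/
def IsSubgradientAt {E : Type*} [NormedAddCommGroup E] [InnerProductSpace ℝ E]
    (f : E → ℝ) (g x : E) : Prop :=
  ∀ z, f x + ⟪g, z - x⟫ ≤ f z

/-- `f` is `γ`-strongly convex: `x ↦ f x − (γ/2)‖x‖²` is convex. -/
def IsStronglyConvex {E : Type*} [NormedAddCommGroup E] [InnerProductSpace ℝ E]
    (γ : ℝ) (f : E → ℝ) : Prop :=
  0 < γ ∧ ConvexOn ℝ Set.univ (fun x => f x - γ / 2 * ‖x‖ ^ 2)

/-- Error estimate: if `(x*, y*)` solves the exact optimality system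
`0 ∈ ∂G(x*) + A*y*`, `0 ∈ ∂F*(y*) − Ax*` and `(x̂, ŷ)` the mismatched one with `V*`
in place of `A*`, then `‖x* − x̂‖ ≤ ‖(V − A)*ŷ‖ / γ_G`. -/
lemma subgrad_shift {E : Type*} [NormedAddCommGroup E] [InnerProductSpace ℝ E]
    (γ : ℝ) (hγ : 0 < γ) (f : E → ℝ)
    (hconv : ConvexOn ℝ Set.univ (fun x => f x - γ / 2 * ‖x‖ ^ 2))
    {g x : E} (h : IsSubgradientAt f g x) :
    IsSubgradientAt (fun z => f z - γ / 2 * ‖z‖ ^ 2) (g - γ • x) x := by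
  intro z
  by_cases hzx : z = x
  · simp [hzx]
  have hs : (0:ℝ) < ‖z - x‖ ^ 2 := by by_contra hc; push_neg at hc; exact hzx (by nlinarith [sq_nonneg ‖z - x‖, norm_nonneg (z-x), (norm_pos_iff.mpr (sub_ne_zero.mpr hzx))] : z = x)
  set s := ‖z - x‖ ^ 2 with hsdef
  -- key inequality for every t ∈ (0,1]
  have key : ∀ t : ℝ, 0 < t → t ≤ 1 →
      ⟪g, z - x⟫ ≤ f z - f x - γ / 2 * s + γ / 2 * t * s := by
    intro t ht ht1
    have hconv' := hconv.2 (Set.mem_univ x) (Set.mem_univ z)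
      (by linarith : (0:ℝ) ≤ 1 - t) (le_of_lt ht) (by ring)
    have hsub := h ((1 - t) • x + t • z)
    have hpt : (1 - t) • x + t • z = x + t • (z - x) := by
      module
    rw [hpt] at hconv' hsub
    have h1 : (x + t • (z - x)) - x = t • (z - x) := by abel
    rw [h1, real_inner_smul_right] at hsub
    have hnorm : ‖x + t • (z - x)‖ ^ 2
        = ‖x‖ ^ 2 + 2 * (t * ⟪x, z - x⟫) + t ^ 2 * s := by
      rw [norm_add_sq_real, real_inner_smul_right, norm_smul, Real.norm_eq_abs,
        abs_of_pos ht, hsdef]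
      ring
    have hzz : ‖z‖ ^ 2 = ‖x‖ ^ 2 + 2 * ⟪x, z - x⟫ + s := by
      have : z = x + (z - x) := by abel
      rw [this, norm_add_sq_real]; simp [hsdef]
    simp only [smul_eq_mul] at hconv'
    rw [hnorm, hzz] at hconv'
    nlinarith [hconv', hsub]
  have lim : ⟪g, z - x⟫ ≤ f z - f x - γ / 2 * s := by
    apply le_of_forall_pos_le_add
    intro ε hε
    set t := min 1 (2 * ε / (γ * s)) with htdef
    have ht0 : 0 < t := lt_min one_pos (by positivity)
    have := key t ht0 (min_le_left _ _)
    have h2 : γ / 2 * t * s ≤ ε := by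
      have : t ≤ 2 * ε / (γ * s) := min_le_right _ _
      calc γ / 2 * t * s ≤ γ / 2 * (2 * ε / (γ * s)) * s := by
            exact mul_le_mul_of_nonneg_right
              (mul_le_mul_of_nonneg_left this (by positivity)) hs.le
        _ = ε := by field_simp
    linarith
  have hinner : ⟪g - γ • x, z - x⟫ = ⟪g, z - x⟫ - γ * ⟪x, z - x⟫ := by
    rw [inner_sub_left, real_inner_smul_left]
  have hzz : ‖z‖ ^ 2 = ‖x‖ ^ 2 + 2 * ⟪x, z - x⟫ + s := by
    have : z = x + (z - x) := by abel
    rw [this, norm_add_sq_real]; simp [hsdef]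
  simp only []
  rw [hinner, hzz]
  linarith

lemma strong_mono {E : Type*} [NormedAddCommGroup E] [InnerProductSpace ℝ E]
    (γ : ℝ) (hγ : 0 < γ) (f : E → ℝ)
    (hconv : ConvexOn ℝ Set.univ (fun x => f x - γ / 2 * ‖x‖ ^ 2))
    {g₁ x₁ g₂ x₂ : E} (h1 : IsSubgradientAt f g₁ x₁) (h2 : IsSubgradientAt f g₂ x₂) :
    γ * ‖x₁ - x₂‖ ^ 2 ≤ ⟪g₁ - g₂, x₁ - x₂⟫ := by
  have H1 := subgrad_shift γ hγ f hconv h1 x₂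
  have H2 := subgrad_shift γ hγ f hconv h2 x₁
  simp only at H1 H2
  have e : (x₂ - x₁) = -(x₁ - x₂) := by abel
  rw [e, inner_neg_right] at H1
  have key : ⟪g₁ - γ • x₁ - (g₂ - γ • x₂), x₁ - x₂⟫
      = ⟪g₁ - g₂, x₁ - x₂⟫ - γ * ‖x₁ - x₂‖ ^ 2 := by
    rw [← real_inner_self_eq_norm_sq]
    simp only [inner_sub_left, inner_sub_right, real_inner_smul_left]
    ring
  rw [inner_sub_left] at key
  linarith

theorem pddr_mismatch_error_estimate
    {X Y : Type*} [NormedAddCommGroup X] [InnerProductSpace ℝ X] [CompleteSpace X]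
    [NormedAddCommGroup Y] [InnerProductSpace ℝ Y] [CompleteSpace Y]
    (A V : X →L[ℝ] Y) (γG : ℝ) (hγG : 0 < γG)
    (G : X → ℝ) (hG : IsStronglyConvex γG G) (Fs : Y → ℝ)
    (xs xh : X) (ys yh : Y)
    (gs : X) (hgs : IsSubgradientAt G gs xs)
    (hes : gs + (ContinuousLinearMap.adjoint A) ys = 0)
    (fs : Y) (hfs : IsSubgradientAt Fs fs ys) (hhs : fs = A xs)
    (gh : X) (hgh : IsSubgradientAt G gh xh)
    (heh : gh + (ContinuousLinearMap.adjoint V) yh = 0)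
    (fh : Y) (hfh : IsSubgradientAt Fs fh yh) (hhh : fh = A xh) :
    ‖xs - xh‖ ≤ (1 / γG) *
      ‖(ContinuousLinearMap.adjoint V) yh - (ContinuousLinearMap.adjoint A) yh‖ := by
  obtain ⟨_, hconv⟩ := hG
  have hmono := strong_mono γG hγG G hconv hgs hgh
  set d := (ContinuousLinearMap.adjoint V) yh - (ContinuousLinearMap.adjoint A) yh with hd
  have hgs' : gs = -((ContinuousLinearMap.adjoint A) ys) := by
    rwa [add_eq_zero_iff_eq_neg] at hes
  have hgh' : gh = -((ContinuousLinearMap.adjoint V) yh) := by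
    rwa [add_eq_zero_iff_eq_neg] at heh
  have hF : (0:ℝ) ≤ ⟪fs - fh, ys - yh⟫ := by
    have h1 := hfs yh
    have h2 := hfh ys
    have e : yh - ys = -(ys - yh) := by abel
    rw [e, inner_neg_right] at h1
    rw [inner_sub_left]
    linarith
  have e3 : ⟪fs - fh, ys - yh⟫ = ⟪ys - yh, A (xs - xh)⟫ := by
    rw [hhs, hhh, ← map_sub, real_inner_comm]
  have hsum : ⟪gs - gh, xs - xh⟫ ≤ ‖d‖ * ‖xs - xh‖ := by
    have e1 : gs - gh = d - (ContinuousLinearMap.adjoint A) (ys - yh) := by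
      rw [hgs', hgh', hd, map_sub]
      abel
    rw [e1, inner_sub_left]
    have e2 : ⟪(ContinuousLinearMap.adjoint A) (ys - yh), xs - xh⟫
        = ⟪ys - yh, A (xs - xh)⟫ :=
      ContinuousLinearMap.adjoint_inner_left _ _ _
    have h4 := real_inner_le_norm d (xs - xh)
    rw [e2]
    rw [e3] at hF
    linarith
  rcases eq_or_ne xs xh with h | h
  · rw [h, sub_self, norm_zero]
    positivity
  · have hn : 0 < ‖xs - xh‖ := norm_pos_iff.mpr (sub_ne_zero.mpr h)
    have h2 : γG * ‖xs - xh‖ ≤ ‖d‖ := by nlinarith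
    calc ‖xs - xh‖ = (1 / γG) * (γG * ‖xs - xh‖) := by field_simp
      _ ≤ (1 / γG) * ‖d‖ := by
          apply mul_le_mul_of_nonneg_left h2
          positivity
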